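/- Let k be a separably closed field of characteristic p. Consider the circular system of equations b_j·x_j + c_j − d_j·x_{j−1}^p = 0 for j ∈ {1,...,q} (indices mod q) with coefficients b_j, c_j, d_j ∈ k satisfying: b_j = 1 for all j and d_j ∈ {0,1} for all j. Then the system has a solution (x_1,...,x_q) ∈ k^q. -/
import Mathlib

/-- Auxiliary recursion: propagate a value `t` at index `0` through the system. -/
private def stmt7Aux (p : ℕ) {k : Type} [Field k] (q : ℕ) (c d : ZMod q → k) (t : k) :
    ℕ → k
  | 0 => t
  | n + 1 => d ((n + 1 : ℕ) : ZMod q) * (stmt7Aux p q c d t n) ^ p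
      - c ((n + 1 : ℕ) : ZMod q)

private theorem stmt7Aux_form (p : ℕ) (hp : p.Prime) {k : Type} [Field k] [CharP k p]
    (q : ℕ) (c d : ZMod q → k) (hd : ∀ j, d j = 0 ∨ d j = 1) (n : ℕ) :
    ∃ ε a : k, (ε = 0 ∨ ε = 1) ∧ ∀ t : k,
      stmt7Aux p q c d t n = ε * t ^ (p ^ n) + a := by
  haveI : Fact p.Prime := ⟨hp⟩
  haveI : ExpChar k p := ExpChar.prime hp
  induction n with
  | zero => exact ⟨1, 0, Or.inr rfl, fun t => by simp [stmt7Aux]⟩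
  | succ n ih =>
    obtain ⟨ε, a, hε, hform⟩ := ih
    refine ⟨d ((n + 1 : ℕ) : ZMod q) * ε, d ((n + 1 : ℕ) : ZMod q) * a ^ p
      - c ((n + 1 : ℕ) : ZMod q), ?_, fun t => ?_⟩
    · rcases hd ((n + 1 : ℕ) : ZMod q) with h | h <;> rcases hε with h' | h' <;>
        rw [h, h'] <;> simp
    · have hεp : ε ^ p = ε := by rcases hε with h' | h' <;> simp [h', hp.pos.ne']
      rw [stmt7Aux, hform, add_pow_char, mul_pow, hεp, ← pow_mul, ← pow_succ]
      ring

/-- Over a separably closed field `k` of characteristic `p`, the circular system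
`b_j x_j + c_j − d_j x_{j−1}^p = 0` (`j` cyclic mod `q`), with `b_j = 1` for all `j` and
`d_j ∈ {0,1}` for all `j`, has a solution in `k^q`. -/
theorem stmt7 (p : ℕ) (hp : p.Prime) (k : Type) [Field k] [IsSepClosed k] [CharP k p]
    (q : ℕ) [NeZero q] (c d : ZMod q → k) (hd : ∀ j, d j = 0 ∨ d j = 1) :
    ∃ x : ZMod q → k, ∀ j : ZMod q, x j + c j - d j * (x (j - 1)) ^ p = 0 := by
  obtain ⟨ε, a, hε, hform⟩ := stmt7Aux_form p hp q c d hd (q - 1)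
  -- find t with t = (d 0 * ε) * t ^ (p ^ q) + (d 0 * a ^ p - c 0)
  have hq : q - 1 + 1 = q := Nat.succ_pred_eq_of_pos (Nat.pos_of_ne_zero (NeZero.ne q))
  have key : ∃ t : k, t = d 0 * ε * t ^ (p ^ q) + (d 0 * a ^ p - c 0) := by
    have hdε : d 0 * ε = 0 ∨ d 0 * ε = 1 := by
      rcases hd 0 with h | h <;> rcases hε with h' | h' <;> simp [h, h']
    rcases hdε with h | h
    · exact ⟨d 0 * a ^ p - c 0, by rw [h]; ring⟩
    · obtain ⟨t, ht⟩ := IsSepClosed.exists_root_C_mul_X_pow_add_C_mul_X_add_C' p (p ^ q)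
        (1 : k) (-1) (d 0 * a ^ p - c 0)
        (dvd_pow_self p (NeZero.ne q))
        (le_trans hp.two_le (Nat.le_self_pow (NeZero.ne q) p))
        (by norm_num)
      exact ⟨t, by rw [h]; linear_combination -ht⟩
  obtain ⟨t, ht⟩ := key
  refine ⟨fun j => stmt7Aux p q c d t j.val, fun j => ?_⟩
  by_cases hj : j = 0
  · subst hj
    have hval : ((0 : ZMod q) - 1).val = q - 1 := by
      rcases q, hq with ⟨_ | n, _⟩
      · omega
      · simp [ZMod.val_neg_one n]
    beta_reduce
    rw [hval, ZMod.val_zero, hform]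
    have hεp : ε ^ p = ε := by rcases hε with h' | h' <;> simp [h', hp.pos.ne']
    haveI : Fact p.Prime := ⟨hp⟩
    haveI : ExpChar k p := ExpChar.prime hp
    rw [add_pow_char, mul_pow, hεp, ← pow_mul, ← pow_succ, hq]
    show t + c 0 - d 0 * (ε * t ^ p ^ q + a ^ p) = 0
    linear_combination ht
  · -- j ≠ 0 : j.val = m + 1, (j-1).val = m
    have hjv : j.val ≠ 0 := fun h => hj ((ZMod.val_eq_zero j).mp h)
    obtain ⟨m, hm⟩ : ∃ m, j.val = m + 1 := ⟨j.val - 1, by omega⟩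
    have hmq : m + 1 < q := hm ▸ ZMod.val_lt j
    have hcast : ((m + 1 : ℕ) : ZMod q) = j := by
      rw [← hm]; exact ZMod.natCast_rightInverse j
    have hj1 : j - 1 = ((m : ℕ) : ZMod q) := by
      rw [← hcast]; push_cast; ring
    have hval1 : (j - 1).val = m := by
      rw [hj1, ZMod.val_natCast_of_lt (by omega)]
    beta_reduce
    rw [hval1, hm]
    show stmt7Aux p q c d t (m + 1) + c j - d j * (stmt7Aux p q c d t m) ^ p = 0
    rw [stmt7Aux, hcast]
    ring
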